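/- With α_{ij} = 1/(i! j!) and β_i = ∑_{q=max(0,2i-s)}^{min(2i,s)} (-1)^{i-q} α_{q,2i-q}, the smallest positive integer ζ with β_ζ ≠ 0 is ζ = ⌊s/2⌋ + 1; that is, β_i = 0 for 1 ≤ i ≤ ⌊s/2⌋ and β_{⌊s/2⌋+1} ≠ 0 (assuming ⌊s/2⌋ + 1 ≤ s). -/

import Mathlib

lemma neg_one_zpow_sub' (i q : ℕ) : ((-1:ℝ)) ^ ((i:ℤ) - (q:ℤ)) = (-1:ℝ)^i * (-1:ℝ)^q := by
  rw [zpow_sub₀ (by norm_num : (-1:ℝ) ≠ 0), zpow_natCast, zpow_natCast, div_eq_mul_inv,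
    ← inv_pow, inv_neg, inv_one]

lemma sumA (n : ℕ) (hn : 1 ≤ n) :
    ∑ q ∈ Finset.range (n+1), (-1:ℝ)^q * ((q.factorial : ℝ) * ((n-q).factorial : ℝ))⁻¹ = 0 := by
  have h1 : ∀ q ∈ Finset.range (n+1),
      (-1:ℝ)^q * ((q.factorial : ℝ) * ((n-q).factorial : ℝ))⁻¹
        = (((-1:ℤ)^q * (n.choose q) : ℤ) : ℝ) / (n.factorial : ℝ) := by
    intro q hq
    have hq' : q ≤ n := by simpa [Nat.lt_succ_iff] using hq
    have hc := Nat.choose_mul_factorial_mul_factorial hq'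
    have hcast : (n.choose q : ℝ) * (q.factorial : ℝ) * ((n-q).factorial : ℝ) = n.factorial := by
      exact_mod_cast congrArg (Nat.cast : ℕ → ℝ) hc
    have h1 : (q.factorial : ℝ) ≠ 0 := Nat.cast_ne_zero.mpr q.factorial_ne_zero
    have h2 : ((n-q).factorial : ℝ) ≠ 0 := Nat.cast_ne_zero.mpr (n-q).factorial_ne_zero
    have h3 : (n.factorial : ℝ) ≠ 0 := Nat.cast_ne_zero.mpr n.factorial_ne_zero
    push_cast
    field_simp
    linear_combination (-1:ℝ) * hcast
  rw [Finset.sum_congr rfl h1, ← Finset.sum_div, ← Int.cast_sum,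
    Int.alternating_sum_range_choose]
  simp [Nat.one_le_iff_ne_zero.mp hn]

theorem zeta_is_first_nonzero_beta (s : ℕ) (hs : 2 ≤ s) (hz : s / 2 + 1 ≤ s) :
    (∀ i : ℕ, 1 ≤ i → i ≤ s / 2 →
      (∑ q ∈ Finset.Icc (2 * i - s) (min (2 * i) s),
          ((-1 : ℝ) ^ ((i : ℤ) - (q : ℤ))) /
            ((Nat.factorial q : ℝ) * (Nat.factorial (2 * i - q) : ℝ))) = 0)
    ∧ (∑ q ∈ Finset.Icc (2 * (s / 2 + 1) - s) (min (2 * (s / 2 + 1)) s),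
        ((-1 : ℝ) ^ (((s / 2 + 1 : ℕ) : ℤ) - (q : ℤ))) /
          ((Nat.factorial q : ℝ) * (Nat.factorial (2 * (s / 2 + 1) - q) : ℝ))) ≠ 0 := by
  constructor
  · intro i h1 h2
    have h2i : 2 * i ≤ s := by omega
    have e1 : 2 * i - s = 0 := by omega
    have e2 : min (2 * i) s = 2 * i := by omega
    rw [e1, e2]
    have hIcc : Finset.Icc 0 (2*i) = Finset.range (2*i + 1) := by
      rw [← Finset.Ico_add_one_right_eq_Icc, Finset.range_eq_Ico]
    rw [hIcc]
    have hA := sumA (2*i) (by omega)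
    calc ∑ q ∈ Finset.range (2*i+1), ((-1:ℝ)^((i:ℤ)-(q:ℤ))) / ((q.factorial : ℝ) * ((2*i-q).factorial : ℝ))
        = (-1:ℝ)^i * ∑ q ∈ Finset.range (2*i+1), (-1:ℝ)^q * ((q.factorial : ℝ) * ((2*i-q).factorial : ℝ))⁻¹ := by
          rw [Finset.mul_sum]
          exact Finset.sum_congr rfl fun q _ => by rw [neg_one_zpow_sub', div_eq_mul_inv, mul_assoc]
      _ = 0 := by rw [hA, mul_zero]
  · set i := s / 2 + 1 with hi
    set g : ℕ → ℝ := fun q => (-1:ℝ)^q * ((q.factorial : ℝ) * ((2*i-q).factorial : ℝ))⁻¹ with hg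
    have hfull : ∑ q ∈ Finset.Ico 0 (2*i+1), g q = 0 := by
      rw [← Finset.range_eq_Ico]; exact sumA (2*i) (by omega)
    have hne : (-1:ℝ)^i ≠ 0 := by positivity
    have hrw : ∀ (a b : ℕ), (∑ q ∈ Finset.Icc a b, ((-1:ℝ)^((i:ℤ)-(q:ℤ))) / ((q.factorial : ℝ) * ((2*i-q).factorial : ℝ))) = (-1:ℝ)^i * ∑ q ∈ Finset.Icc a b, g q := by
      intro a b
      rw [Finset.mul_sum]
      exact Finset.sum_congr rfl fun q _ => by rw [hg, neg_one_zpow_sub', div_eq_mul_inv, mul_assoc]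
    rcases Nat.even_or_odd s with ⟨k, hk⟩ | ⟨k, hk⟩
    · -- s = 2k, i = k+1, sum over Icc 2 (2k)
      have hk1 : 1 ≤ k := by omega
      have h2i : 2 * i = 2*k + 2 := by omega
      have e1 : 2 * i - s = 2 := by omega
      have e2 : min (2 * i) s = 2 * k := by omega
      rw [e1, e2, hrw]
      have hA : ∑ q ∈ Finset.Ico 0 2, g q + ∑ q ∈ Finset.Ico 2 (2*k+1), g q
          = ∑ q ∈ Finset.Ico 0 (2*k+1), g q :=
        Finset.sum_Ico_consecutive g (by omega) (by omega)
      have hB : ∑ q ∈ Finset.Ico 0 (2*k+1), g q + ∑ q ∈ Finset.Ico (2*k+1) (2*i+1), g q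
          = ∑ q ∈ Finset.Ico 0 (2*i+1), g q :=
        Finset.sum_Ico_consecutive g (by omega) (by omega)
      have hlow : ∑ q ∈ Finset.Ico 0 2, g q = g 0 + g 1 := by
        rw [Finset.sum_Ico_succ_top (by omega), Finset.sum_Ico_succ_top (by omega),
          Finset.Ico_self, Finset.sum_empty, zero_add]
      have hhigh : ∑ q ∈ Finset.Ico (2*k+1) (2*i+1), g q = g (2*k+1) + g (2*k+2) := by
        rw [show 2*i+1 = (2*k+2)+1 by omega, Finset.sum_Ico_succ_top (by omega),
          Finset.sum_Ico_succ_top (by omega), Finset.Ico_self, Finset.sum_empty, zero_add]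
      have hmid : ∑ q ∈ Finset.Icc 2 (2*k), g q = -(g 0 + g 1 + g (2*k+1) + g (2*k+2)) := by
        rw [← Finset.Ico_add_one_right_eq_Icc]
        have := hfull
        rw [← hB, ← hA, hlow, hhigh] at this
        linarith
      have hg0 : g 0 = (((2*k+2).factorial : ℝ))⁻¹ := by
        simp [hg, h2i]
      have hg1 : g 1 = -(((2*k+1).factorial : ℝ))⁻¹ := by
        simp [hg, show 2*i - 1 = 2*k+1 by omega]
      have hg2 : g (2*k+1) = -(((2*k+1).factorial : ℝ))⁻¹ := by
        have hp : (-1:ℝ)^(2*k+1) = -1 := Odd.neg_one_pow ⟨k, by ring⟩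
        simp [hg, show 2*i - (2*k+1) = 1 by omega, hp]
      have hg3 : g (2*k+2) = (((2*k+2).factorial : ℝ))⁻¹ := by
        have hp : (-1:ℝ)^(2*k+2) = 1 := Even.neg_one_pow ⟨k+1, by ring⟩
        simp [hg, show 2*i - (2*k+2) = 0 by omega, hp]
      have hlt : (((2*k+1).factorial : ℝ)) < ((2*k+2).factorial : ℝ) := by
        exact_mod_cast (Nat.factorial_lt (by omega)).mpr (by omega)
      have hpos : (0:ℝ) < ((2*k+1).factorial : ℝ) := by positivity
      have hinv : (((2*k+2).factorial : ℝ))⁻¹ < (((2*k+1).factorial : ℝ))⁻¹ :=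
        inv_strictAnti₀ hpos hlt
      have hM : ∑ q ∈ Finset.Icc 2 (2*k), g q ≠ 0 := by
        rw [hmid, hg0, hg1, hg2, hg3]
        intro h; nlinarith
      exact mul_ne_zero hne hM
    · -- s = 2k+1, i = k+1, sum over Icc 1 (2k+1)
      have hk1 : 1 ≤ k := by omega
      have h2i : 2 * i = 2*k + 2 := by omega
      have e1 : 2 * i - s = 1 := by omega
      have e2 : min (2 * i) s = 2*k+1 := by omega
      rw [e1, e2, hrw]
      have hA : ∑ q ∈ Finset.Ico 0 1, g q + ∑ q ∈ Finset.Ico 1 (2*k+2), g q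
          = ∑ q ∈ Finset.Ico 0 (2*k+2), g q :=
        Finset.sum_Ico_consecutive g (by omega) (by omega)
      have hB : ∑ q ∈ Finset.Ico 0 (2*k+2), g q + ∑ q ∈ Finset.Ico (2*k+2) (2*i+1), g q
          = ∑ q ∈ Finset.Ico 0 (2*i+1), g q :=
        Finset.sum_Ico_consecutive g (by omega) (by omega)
      have hlow : ∑ q ∈ Finset.Ico 0 1, g q = g 0 := by
        rw [Finset.sum_Ico_succ_top (by omega), Finset.Ico_self, Finset.sum_empty, zero_add]
      have hhigh : ∑ q ∈ Finset.Ico (2*k+2) (2*i+1), g q = g (2*k+2) := by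
        rw [show 2*i+1 = (2*k+2)+1 by omega, Finset.sum_Ico_succ_top (by omega),
          Finset.Ico_self, Finset.sum_empty, zero_add]
      have hmid : ∑ q ∈ Finset.Icc 1 (2*k+1), g q = -(g 0 + g (2*k+2)) := by
        rw [← Finset.Ico_add_one_right_eq_Icc]
        rw [show 2*k+1+1 = 2*k+2 by omega]
        have := hfull
        rw [← hB, ← hA, hlow, hhigh] at this
        linarith
      have hg0 : g 0 = (((2*k+2).factorial : ℝ))⁻¹ := by
        simp [hg, h2i]
      have hg3 : g (2*k+2) = (((2*k+2).factorial : ℝ))⁻¹ := by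
        have hp : (-1:ℝ)^(2*k+2) = 1 := Even.neg_one_pow ⟨k+1, by ring⟩
        simp [hg, show 2*i - (2*k+2) = 0 by omega, hp]
      have hpos : (0:ℝ) < ((2*k+2).factorial : ℝ) := by positivity
      have hM : ∑ q ∈ Finset.Icc 1 (2*k+1), g q ≠ 0 := by
        rw [hmid, hg0, hg3]
        intro h
        have : (0:ℝ) < (((2*k+2).factorial : ℝ))⁻¹ := by positivity
        linarith
      exact mul_ne_zero hne hM
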